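/- The function Φ₁(r) = (1/24) sech²(r) (f₁(r) + f₂(r) + f₃(r)) tends to 0 as r → ±∞, where f₁(r) = r[3 - 8cosh(2r) - cosh(4r)], f₂(r) = sinh(2r)[8 log(2cosh r) - 1] + sinh(4r) log(2cosh r), and f₃(r) = π²/2 + 6r² + 6 Li₂(-e^{-2r}). -/

import Mathlib

open Filter

/-- The real dilogarithm, defined for x ≤ 1 by Li₂(x) = -∫_0^x log(1-t)/t dt. -/
noncomputable def Li2 (x : ℝ) : ℝ := -∫ t in (0:ℝ)..x, Real.log (1 - t) / t

noncomputable def Phi1 (r : ℝ) : ℝ :=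
  (1 / 24) * (1 / Real.cosh r) ^ 2 *
    ((r * (3 - 8 * Real.cosh (2 * r) - Real.cosh (4 * r)))
      + (Real.sinh (2 * r) * (8 * Real.log (2 * Real.cosh r) - 1)
          + Real.sinh (4 * r) * Real.log (2 * Real.cosh r))
      + (Real.pi ^ 2 / 2 + 6 * r ^ 2 + 6 * Li2 (-Real.exp (-2 * r))))

noncomputable def F12 (r : ℝ) : ℝ :=
  r * (3 - 8 * Real.cosh (2 * r) - Real.cosh (4 * r))
    + (Real.sinh (2 * r) * (8 * Real.log (2 * Real.cosh r) - 1)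
        + Real.sinh (4 * r) * Real.log (2 * Real.cosh r))

noncomputable def F3 (r : ℝ) : ℝ :=
  Real.pi ^ 2 / 2 + 6 * r ^ 2 + 6 * Li2 (-Real.exp (-2 * r))

lemma phi1_eq (r : ℝ) :
    Phi1 r = (1 / 24) * ((1 / Real.cosh r) ^ 2 * F12 r + (1 / Real.cosh r) ^ 2 * F3 r) := by
  rw [Phi1, F12, F3]; ring

/-! ### basic limits -/

lemma h2r_top : Tendsto (fun r : ℝ => 2 * r) atTop atTop :=
  Tendsto.const_mul_atTop two_pos tendsto_id

lemma hneg2r : Tendsto (fun r : ℝ => -2 * r) atTop atBot := by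
  refine (tendsto_neg_atTop_atBot.comp h2r_top).congr fun r => ?_
  show -(2 * r) = -2 * r
  ring

lemma hx0 : Tendsto (fun r : ℝ => Real.exp (-2 * r)) atTop (nhds 0) :=
  Real.tendsto_exp_atBot.comp hneg2r

lemma hrx : Tendsto (fun r : ℝ => r * Real.exp (-2 * r)) atTop (nhds 0) := by
  have h := ((Real.tendsto_pow_mul_exp_neg_atTop_nhds_zero 1).comp h2r_top).const_mul (1/2 : ℝ)
  rw [mul_zero] at h
  refine h.congr fun r => ?_
  show (1/2 : ℝ) * ((2 * r) ^ 1 * Real.exp (-(2 * r))) = r * Real.exp (-2 * r)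
  rw [show (-(2 * r) : ℝ) = -2 * r by ring]
  ring

lemma hr2x : Tendsto (fun r : ℝ => r ^ 2 * Real.exp (-2 * r)) atTop (nhds 0) := by
  have h := ((Real.tendsto_pow_mul_exp_neg_atTop_nhds_zero 2).comp h2r_top).const_mul (1/4 : ℝ)
  rw [mul_zero] at h
  refine h.congr fun r => ?_
  show (1/4 : ℝ) * ((2 * r) ^ 2 * Real.exp (-(2 * r))) = r ^ 2 * Real.exp (-2 * r)
  rw [show (-(2 * r) : ℝ) = -2 * r by ring]
  ring

lemma hL0 : Tendsto (fun r : ℝ => Real.log (1 + Real.exp (-2 * r))) atTop (nhds 0) := by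
  have h := (Real.continuousAt_log (by norm_num : (1 : ℝ) + 0 ≠ 0)).tendsto.comp
    (hx0.const_add 1)
  rw [show Real.log (1 + 0) = 0 by rw [add_zero, Real.log_one]] at h
  exact h

lemma log_one_add_bounds {x : ℝ} (hx : 0 < x) :
    x - x ^ 2 ≤ Real.log (1 + x) ∧ Real.log (1 + x) ≤ x := by
  have h1x : (0 : ℝ) < 1 + x := by linarith
  constructor
  · have h1 := Real.log_le_sub_one_of_pos (show (0:ℝ) < (1 + x)⁻¹ by positivity)
    rw [Real.log_inv] at h1
    have h2 : (1 : ℝ) - (1 + x)⁻¹ = x / (1 + x) := by field_simp; ring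
    have h3 : x - x ^ 2 ≤ x / (1 + x) := by
      rw [le_div_iff₀ h1x]
      nlinarith [pow_pos hx 3, sq_nonneg x]
    linarith
  · have := Real.log_le_sub_one_of_pos h1x; linarith

lemma hmid : Tendsto
    (fun r : ℝ => (Real.log (1 + Real.exp (-2 * r)) - Real.exp (-2 * r)) /
      (2 * Real.exp (-2 * r))) atTop (nhds 0) := by
  apply squeeze_zero_norm (a := fun r : ℝ => Real.exp (-2 * r) / 2)
  · intro r
    set x := Real.exp (-2 * r) with hxdef
    have hxpos : 0 < x := Real.exp_pos _
    obtain ⟨hlo, hhi⟩ := log_one_add_bounds hxpos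
    rw [Real.norm_eq_abs, abs_of_nonpos
      (div_nonpos_of_nonpos_of_nonneg (by linarith) (by positivity))]
    rw [← neg_div, neg_sub, div_le_div_iff₀ (by positivity) two_pos]
    nlinarith
  · have h := hx0.div_const 2
    rwa [zero_div] at h

/-! ### the algebraic identity -/

lemma exp_neg_two_mul' (r : ℝ) : Real.exp (-2 * r) = (Real.exp r ^ 2)⁻¹ := by
  rw [show (-2 * r : ℝ) = -(2 * r) by ring, Real.exp_neg,
    show (2 * r : ℝ) = r + r by ring, Real.exp_add, pow_two]

lemma hh_eq (r : ℝ) :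
    (1 / Real.cosh r) ^ 2 * F12 r =
      (4 / (1 + Real.exp (-2 * r)) ^ 2) *
        (3 * (r * Real.exp (-2 * r)) - 8 * (r * Real.exp (-2 * r)) * Real.exp (-2 * r)
          - (r * Real.exp (-2 * r)) * Real.exp (-2 * r) ^ 2
          + 4 * Real.log (1 + Real.exp (-2 * r))
          - 4 * Real.log (1 + Real.exp (-2 * r)) * Real.exp (-2 * r) ^ 2
          + (Real.log (1 + Real.exp (-2 * r)) - Real.exp (-2 * r)) / (2 * Real.exp (-2 * r))
          - Real.log (1 + Real.exp (-2 * r)) * Real.exp (-2 * r) ^ 3 / 2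
          + Real.exp (-2 * r) ^ 2 / 2) := by
  have hE : 0 < Real.exp r := Real.exp_pos r
  have em : Real.exp (-r) = (Real.exp r)⁻¹ := Real.exp_neg r
  have e2 : Real.exp (2 * r) = Real.exp r ^ 2 := by
    rw [show (2 * r : ℝ) = r + r by ring, Real.exp_add]; ring
  have em2 : Real.exp (-2 * r) = (Real.exp r ^ 2)⁻¹ := exp_neg_two_mul' r
  have e4 : Real.exp (4 * r) = Real.exp r ^ 4 := by
    rw [show (4 * r : ℝ) = (2 * r) + (2 * r) by ring, Real.exp_add, e2]; ring
  have em4 : Real.exp (-(4 * r)) = (Real.exp r ^ 4)⁻¹ := by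
    rw [Real.exp_neg, e4]
  have hlog : Real.log (2 * Real.cosh r) = r + Real.log (1 + Real.exp (-2 * r)) := by
    have h1 : 2 * Real.cosh r = Real.exp r * (1 + Real.exp (-2 * r)) := by
      rw [Real.cosh_eq, em, em2]
      field_simp
    rw [h1, Real.log_mul hE.ne' (by positivity), Real.log_exp]
  rw [F12, hlog, Real.sinh_eq, Real.sinh_eq, Real.cosh_eq, Real.cosh_eq, Real.cosh_eq]
  rw [show (-(2 * r) : ℝ) = -2 * r by ring]
  rw [em, em2, em4, e2, e4]
  set E := Real.exp r with hE_def
  set L := Real.log (1 + (E ^ 2)⁻¹) with hL_def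
  have hden : (E + E⁻¹) ≠ 0 := by positivity
  have h1x' : (1 + (E ^ 2)⁻¹) ≠ 0 := by positivity
  field_simp
  ring

lemma hh_top : Tendsto (fun r : ℝ => (1 / Real.cosh r) ^ 2 * F12 r) atTop (nhds 0) := by
  have hp2 : Tendsto (fun r : ℝ => Real.exp (-2 * r) ^ 2) atTop (nhds 0) := by
    have h := hx0.pow 2; rwa [show (0:ℝ) ^ 2 = 0 by norm_num] at h
  have hp3 : Tendsto (fun r : ℝ => Real.exp (-2 * r) ^ 3) atTop (nhds 0) := by
    have h := hx0.pow 3; rwa [show (0:ℝ) ^ 3 = 0 by norm_num] at h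
  have t1 := hrx.const_mul (3:ℝ)
  have t2 := (hrx.const_mul (8:ℝ)).mul hx0
  have t3 := hrx.mul hp2
  have t4 := hL0.const_mul (4:ℝ)
  have t5 := (hL0.const_mul (4:ℝ)).mul hp2
  have t7 := (hL0.mul hp3).div_const (2:ℝ)
  have t8 := hp2.div_const (2:ℝ)
  have hsum := ((((((t1.sub t2).sub t3).add t4).sub t5).add hmid).sub t7).add t8
  simp only [mul_zero, zero_mul, sub_zero, add_zero, zero_div] at hsum
  have hden : Tendsto (fun r : ℝ => (1 + Real.exp (-2 * r)) ^ 2) atTop (nhds 1) := by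
    have h := (hx0.const_add 1).pow 2
    rwa [show ((1:ℝ) + 0) ^ 2 = 1 by norm_num] at h
  have h4 : Tendsto (fun r : ℝ => 4 / (1 + Real.exp (-2 * r)) ^ 2) atTop (nhds 4) := by
    have h := (tendsto_const_nhds (x := (4:ℝ)) (f := atTop)).div hden one_ne_zero
    rwa [div_one] at h
  have hprod := h4.mul hsum
  rw [mul_zero] at hprod
  exact hprod.congr fun r => (hh_eq r).symm

lemma hh_odd (r : ℝ) :
    (1 / Real.cosh (-r)) ^ 2 * F12 (-r) = -((1 / Real.cosh r) ^ 2 * F12 r) := by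
  simp only [F12, mul_neg, Real.sinh_neg, Real.cosh_neg]
  ring

lemma hh_bot : Tendsto (fun r : ℝ => (1 / Real.cosh r) ^ 2 * F12 r) atBot (nhds 0) := by
  have h := (hh_top.comp tendsto_neg_atBot_atTop).neg
  rw [neg_zero] at h
  refine h.congr fun r => ?_
  show -((1 / Real.cosh (-r)) ^ 2 * F12 (-r)) = (1 / Real.cosh r) ^ 2 * F12 r
  rw [hh_odd r, neg_neg]

/-! ### the Li2 bound -/

open MeasureTheory in
lemma li2_abs_le {x : ℝ} (hx : x ≤ 0) : |Li2 x| ≤ 4 * Real.sqrt (-x) := by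
  have hmeas : Measurable fun t : ℝ => Real.log (1 - t) / t :=
    (Real.measurable_log.comp (measurable_const.sub measurable_id)).div measurable_id
  have hb1 : ∀ t ∈ Set.Ioc x 0, ‖Real.log (1 - t) / t‖ ≤ 1 := by
    intro t ht
    rcases eq_or_lt_of_le ht.2 with h0 | h0
    · simp [h0]
    · have h1t : (0:ℝ) < 1 - t := by linarith
      have hlog : Real.log (1 - t) ≤ -t := by
        have := Real.log_le_sub_one_of_pos h1t; linarith
      have hlog0 : 0 ≤ Real.log (1 - t) := Real.log_nonneg (by linarith)
      rw [Real.norm_eq_abs, abs_div, abs_of_nonneg hlog0, abs_of_neg h0,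
        div_le_one (by linarith)]
      exact hlog
  have hInt : IntervalIntegrable (fun t => Real.log (1 - t) / t) volume x 0 := by
    rw [intervalIntegrable_iff, Set.uIoc_of_le hx]
    exact Measure.integrableOn_of_bounded measure_Ioc_lt_top.ne hmeas.aestronglyMeasurable
      (ae_restrict_of_forall_mem measurableSet_Ioc hb1)
  have hgInt : IntervalIntegrable (fun t : ℝ => 2 * (-t) ^ (-(1/2) : ℝ)) volume x 0 := by
    have h1 : IntervalIntegrable (fun t : ℝ => t ^ (-(1/2) : ℝ)) volume (-x) (-0) := by
      rw [neg_zero]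
      exact intervalIntegral.intervalIntegrable_rpow' (by norm_num)
    have h2 := (IntervalIntegrable.iff_comp_neg (by simp)).mp h1
    simp only [neg_neg, neg_zero] at h2
    exact h2.const_mul 2
  have hpt : ∀ t ∈ Set.Icc x 0, |Real.log (1 - t) / t| ≤ 2 * (-t) ^ (-(1/2) : ℝ) := by
    intro t ht
    rcases eq_or_lt_of_le ht.2 with h0 | h0
    · simp [h0]
    · set s : ℝ := -t with hs_def
      have hs : 0 < s := by simp only [hs_def]; linarith
      have h1s : (0:ℝ) < 1 + s := by linarith
      have hsq : Real.sqrt (1 + s) ≤ 1 + Real.sqrt s := by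
        rw [show (1:ℝ) + Real.sqrt s = Real.sqrt ((1 + Real.sqrt s) ^ 2) from
          (Real.sqrt_sq (by positivity)).symm]
        apply Real.sqrt_le_sqrt
        nlinarith [Real.sq_sqrt hs.le, Real.sqrt_nonneg s]
      have hkey : Real.log (1 + s) ≤ 2 * Real.sqrt s := by
        have h1 : Real.log (1 + s) = 2 * Real.log (Real.sqrt (1 + s)) := by
          rw [Real.log_sqrt h1s.le]; ring
        have h2 : Real.log (Real.sqrt (1 + s)) ≤ Real.sqrt (1 + s) - 1 :=
          Real.log_le_sub_one_of_pos (Real.sqrt_pos.mpr h1s)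
        linarith
      have h1t : (1 : ℝ) - t = 1 + s := by rw [hs_def]; ring
      have hss : Real.sqrt s * Real.sqrt s = s := Real.mul_self_sqrt hs.le
      have hsne : Real.sqrt s ≠ 0 := (Real.sqrt_pos.mpr hs).ne'
      have hrw : (2:ℝ) * (-t) ^ (-(1/2) : ℝ) = 2 * Real.sqrt s / s := by
        rw [← hs_def, Real.rpow_neg hs.le, ← Real.sqrt_eq_rpow]
        field_simp
        nlinarith [hss]
      rw [hrw, h1t, abs_div, abs_of_nonneg (Real.log_nonneg (by linarith)),
        abs_of_neg h0, ← hs_def, div_le_div_iff_of_pos_right hs]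
      exact hkey
  have hcalc : (∫ t in x..0, 2 * (-t) ^ (-(1/2) : ℝ)) = 4 * Real.sqrt (-x) := by
    have h1 : (∫ t in x..0, 2 * (-t) ^ (-(1/2) : ℝ))
        = ∫ s in (-(0:ℝ))..(-x), 2 * s ^ (-(1/2) : ℝ) :=
      intervalIntegral.integral_comp_neg (fun s => 2 * s ^ (-(1/2) : ℝ))
    rw [h1, neg_zero, intervalIntegral.integral_const_mul,
      integral_rpow (Or.inl (by norm_num)),
      show (-(1/2) : ℝ) + 1 = 1/2 by norm_num,
      Real.zero_rpow (by norm_num), ← Real.sqrt_eq_rpow]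
    ring
  have hLi : Li2 x = ∫ t in x..0, Real.log (1 - t) / t := by
    rw [Li2, intervalIntegral.integral_symm, neg_neg]
  rw [hLi, ← hcalc]
  calc |∫ t in x..0, Real.log (1 - t) / t| ≤ ∫ t in x..0, |Real.log (1 - t) / t| :=
        intervalIntegral.abs_integral_le_integral_abs hx
    _ ≤ ∫ t in x..0, 2 * (-t) ^ (-(1/2) : ℝ) :=
        intervalIntegral.integral_mono_on hx hInt.abs hgInt hpt

lemma li2_exp_le (r : ℝ) : |Li2 (-Real.exp (-2 * r))| ≤ 4 * Real.exp (-r) := by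
  have h := li2_abs_le (x := -Real.exp (-2 * r)) (neg_nonpos.mpr (Real.exp_pos _).le)
  rw [neg_neg] at h
  have hsq : Real.sqrt (Real.exp (-2 * r)) = Real.exp (-r) := by
    rw [show Real.exp (-2 * r) = Real.exp (-r) ^ 2 by
      rw [pow_two, ← Real.exp_add]; congr 1; ring, Real.sqrt_sq (Real.exp_pos _).le]
  rwa [hsq] at h

lemma f3_abs_le (r : ℝ) :
    |F3 r| ≤ Real.pi ^ 2 / 2 + 6 * r ^ 2 + 24 * Real.exp (-r) := by
  rw [F3]
  have h1 := abs_add_le (Real.pi ^ 2 / 2 + 6 * r ^ 2) (6 * Li2 (-Real.exp (-2 * r)))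
  have h2 : |Real.pi ^ 2 / 2 + 6 * r ^ 2| = Real.pi ^ 2 / 2 + 6 * r ^ 2 :=
    abs_of_nonneg (by positivity)
  have h3 : |(6:ℝ) * Li2 (-Real.exp (-2 * r))| = 6 * |Li2 (-Real.exp (-2 * r))| := by
    rw [abs_mul, abs_of_nonneg (by norm_num : (0:ℝ) ≤ 6)]
  have h4 := li2_exp_le r
  rw [h2, h3] at h1
  linarith

/-! ### the F3 part -/

lemma kk_top : Tendsto (fun r : ℝ => (1 / Real.cosh r) ^ 2 * F3 r) atTop (nhds 0) := by
  apply squeeze_zero_norm (a := fun r : ℝ =>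
    2 * Real.pi ^ 2 * Real.exp (-2 * r) + 24 * (r ^ 2 * Real.exp (-2 * r))
      + 96 * (Real.exp (-2 * r) * Real.exp (-r)))
  · intro r
    have hcoshpos : 0 < Real.cosh r := Real.cosh_pos r
    have hsech : (1 / Real.cosh r) ^ 2 ≤ 4 * Real.exp (-2 * r) := by
      have hcosh : Real.exp r / 2 ≤ Real.cosh r := by
        rw [Real.cosh_eq]
        have := (Real.exp_pos (-r)).le
        linarith
      have h1 : 1 / Real.cosh r ≤ 2 / Real.exp r := by
        have := one_div_le_one_div_of_le (show (0:ℝ) < Real.exp r / 2 by positivity) hcosh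
        rwa [one_div_div] at this
      have h2 : (1 / Real.cosh r) ^ 2 ≤ (2 / Real.exp r) ^ 2 :=
        pow_le_pow_left₀ (by positivity) h1 2
      have h3 : (2 / Real.exp r) ^ 2 = 4 * Real.exp (-2 * r) := by
        rw [div_pow, exp_neg_two_mul', div_eq_mul_inv]
        norm_num
      linarith
    have hF3 := f3_abs_le r
    rw [Real.norm_eq_abs, abs_mul, abs_of_nonneg (by positivity :
      (0:ℝ) ≤ (1 / Real.cosh r) ^ 2)]
    calc (1 / Real.cosh r) ^ 2 * |F3 r|
        ≤ (4 * Real.exp (-2 * r)) * (Real.pi ^ 2 / 2 + 6 * r ^ 2 + 24 * Real.exp (-r)) :=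
          mul_le_mul hsech hF3 (abs_nonneg _) (by positivity)
      _ = 2 * Real.pi ^ 2 * Real.exp (-2 * r) + 24 * (r ^ 2 * Real.exp (-2 * r))
          + 96 * (Real.exp (-2 * r) * Real.exp (-r)) := by ring
  · have hxm : Tendsto (fun r : ℝ => Real.exp (-r)) atTop (nhds 0) :=
      Real.tendsto_exp_atBot.comp tendsto_neg_atTop_atBot
    have t1 := hx0.const_mul (2 * Real.pi ^ 2)
    have t2 := hr2x.const_mul (24:ℝ)
    have t3 := (hx0.mul hxm).const_mul (96:ℝ)
    have h := (t1.add t2).add t3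
    simp only [mul_zero, zero_mul, add_zero] at h
    exact h

lemma kk_bot : Tendsto (fun r : ℝ => (1 / Real.cosh r) ^ 2 * F3 r) atBot (nhds 0) := by
  apply squeeze_zero_norm (a := fun r : ℝ =>
    2 * Real.pi ^ 2 * Real.exp (2 * r) + 24 * (r ^ 2 * Real.exp (2 * r))
      + 96 * Real.exp r)
  · intro r
    have hcoshpos : 0 < Real.cosh r := Real.cosh_pos r
    have hsech : (1 / Real.cosh r) ^ 2 ≤ 4 * Real.exp (2 * r) := by
      have hcosh : Real.exp (-r) / 2 ≤ Real.cosh r := by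
        rw [Real.cosh_eq]
        have := (Real.exp_pos r).le
        linarith
      have h1 : 1 / Real.cosh r ≤ 2 / Real.exp (-r) := by
        have := one_div_le_one_div_of_le (show (0:ℝ) < Real.exp (-r) / 2 by positivity) hcosh
        rwa [one_div_div] at this
      have h2 : (1 / Real.cosh r) ^ 2 ≤ (2 / Real.exp (-r)) ^ 2 :=
        pow_le_pow_left₀ (by positivity) h1 2
      have h3 : (2 / Real.exp (-r)) ^ 2 = 4 * Real.exp (2 * r) := by
        rw [div_pow, show Real.exp (-r) ^ 2 = Real.exp (-(2 * r)) by
            rw [pow_two, ← Real.exp_add]; congr 1; ring,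
          Real.exp_neg, div_eq_mul_inv, inv_inv]
        norm_num
      linarith
    have hF3 := f3_abs_le r
    rw [Real.norm_eq_abs, abs_mul, abs_of_nonneg (by positivity :
      (0:ℝ) ≤ (1 / Real.cosh r) ^ 2)]
    calc (1 / Real.cosh r) ^ 2 * |F3 r|
        ≤ (4 * Real.exp (2 * r)) * (Real.pi ^ 2 / 2 + 6 * r ^ 2 + 24 * Real.exp (-r)) :=
          mul_le_mul hsech hF3 (abs_nonneg _) (by positivity)
      _ = 2 * Real.pi ^ 2 * Real.exp (2 * r) + 24 * (r ^ 2 * Real.exp (2 * r))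
          + 96 * (Real.exp (2 * r) * Real.exp (-r)) := by ring
      _ = 2 * Real.pi ^ 2 * Real.exp (2 * r) + 24 * (r ^ 2 * Real.exp (2 * r))
          + 96 * Real.exp r := by
            rw [show Real.exp (2 * r) * Real.exp (-r) = Real.exp r by
              rw [← Real.exp_add]; congr 1; ring]
  · have hx2bot : Tendsto (fun r : ℝ => Real.exp (2 * r)) atBot (nhds 0) :=
      Real.tendsto_exp_atBot.comp (Tendsto.const_mul_atBot two_pos tendsto_id)
    have hr2bot : Tendsto (fun r : ℝ => r ^ 2 * Real.exp (2 * r)) atBot (nhds 0) := by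
      refine (hr2x.comp tendsto_neg_atBot_atTop).congr fun r => ?_
      show (-r) ^ 2 * Real.exp (-2 * -r) = r ^ 2 * Real.exp (2 * r)
      rw [show (-2 * -r : ℝ) = 2 * r by ring]
      ring
    have t1 := hx2bot.const_mul (2 * Real.pi ^ 2)
    have t2 := hr2bot.const_mul (24:ℝ)
    have t3 := Real.tendsto_exp_atBot.const_mul (96:ℝ)
    have h := (t1.add t2).add t3
    simp only [mul_zero, add_zero] at h
    exact h

/-- Φ₁(r) → 0 as r → ±∞. -/
theorem Phi1_vanishes_at_infinity :
    Tendsto Phi1 atTop (nhds 0) ∧ Tendsto Phi1 atBot (nhds 0) := by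
  constructor
  · have h := (hh_top.add kk_top).const_mul (1/24 : ℝ)
    rw [add_zero, mul_zero] at h
    exact h.congr fun r => (phi1_eq r).symm
  · have h := (hh_bot.add kk_bot).const_mul (1/24 : ℝ)
    rw [add_zero, mul_zero] at h
    exact h.congr fun r => (phi1_eq r).symm
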